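/- arXiv:2602.10264 — 3 statements merged into one kernel-verified Lean document; each statement's English description precedes it below -/
import Mathlib

section
/- Let X, Y be independent standard real Gaussians and let s, t be real numbers with st > 0 and s² + t² = 1. Then E[|tX + isY|^{2q}] = q! (2st)^q L_q(1/(2st)), where L_q is the q-th Legendre polynomial. -/
open MeasureTheory ProbabilityTheory

/-- The Legendre polynomials, defined by the Bonnet recurrence
`(n+2) L_{n+2}(x) = (2n+3) x L_{n+1}(x) - (n+1) L_n(x)`, with `L_0 = 1`, `L_1 = x`.
They are the orthogonal polynomials for the uniform weight on `[-1,1]`, normalized by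
`L_q(1) = 1`, with generating function `(1-2xz+z²)^{-1/2} = ∑_q L_q(x) z^q`. -/
noncomputable def legendre : ℕ → ℝ → ℝ
  | 0, _ => 1
  | 1, x => x
  | n + 2, x =>
      ((2 * n + 3) * x * legendre (n + 1) x - (n + 1) * legendre n x) / (n + 2)

open Real
open scoped NNReal ENNReal


noncomputable def Dfac : ℕ → ℝ
  | 0 => 1
  | k + 1 => (2 * k + 1) * Dfac k

lemma Dfac_succ (k : ℕ) : Dfac (k + 1) = (2 * k + 1) * Dfac k := rfl

lemma gamma_half (k : ℕ) : Real.Gamma (k + 1/2) = Dfac k * Real.sqrt π / 2 ^ k := by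
  induction k with
  | zero =>
      rw [show ((0:ℕ):ℝ) + 1/2 = 1/2 by norm_num, Real.Gamma_one_half_eq]
      simp [Dfac]
  | succ n ih =>
      have h : ((n:ℕ) + 1 + 1/2 : ℝ) = ((n:ℝ) + 1/2) + 1 := by ring
      push_cast
      rw [h, Real.Gamma_add_one (by positivity), ih, Dfac_succ]
      ring

lemma integral_pow_exp (k : ℕ) :
    ∫ x : ℝ, x ^ (2 * k) * Real.exp (-x ^ 2 / 2) = Real.sqrt (2 * π) * Dfac k := by
  have h1 : (∫ x : ℝ, x ^ (2 * k) * Real.exp (-x ^ 2 / 2))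
      = ∫ x : ℝ, (fun y : ℝ => y ^ (2 * k) * Real.exp (-y ^ 2 / 2)) |x| := by
    congr 1; funext x
    simp only [(even_two_mul k).pow_abs, sq_abs]
  rw [h1, integral_comp_abs (f := fun y : ℝ => y ^ (2 * k) * Real.exp (-y ^ 2 / 2))]
  have h2 : (∫ y in Set.Ioi (0:ℝ), y ^ (2 * k) * Real.exp (-y ^ 2 / 2))
      = ∫ y in Set.Ioi (0:ℝ), y ^ ((2 * k : ℕ) : ℝ) * Real.exp (-(1/2) * y ^ ((2:ℕ) : ℝ)) := by
    congr 1; funext y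
    rw [Real.rpow_natCast, Real.rpow_natCast]
    ring_nf
  rw [h2, integral_rpow_mul_exp_neg_mul_rpow (by norm_num) (lt_of_lt_of_le neg_one_lt_zero (by positivity)) (by norm_num)]
  have h3 : (((2 * k : ℕ) : ℝ) + 1) / ((2:ℕ) : ℝ) = (k : ℝ) + 1/2 := by push_cast; ring
  rw [h3, gamma_half]
  have h4 : ((1:ℝ)/2) ^ (-((k:ℝ) + 1/2)) = 2 ^ ((k:ℝ) + 1/2) := by
    rw [one_div, Real.inv_rpow (by norm_num), ← Real.rpow_neg (by norm_num), neg_neg]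
  have h5 : (-((((2 * k : ℕ):ℝ)) + 1) / ((2:ℕ):ℝ)) = -((k:ℝ) + 1/2) := by push_cast; ring
  rw [h5, h4, Real.rpow_add (by norm_num), Real.rpow_natCast]
  rw [show ((1:ℝ)/(2:ℕ)) = 1/2 by norm_num]
  have h6 : (2:ℝ) ^ ((1:ℝ)/2) = Real.sqrt 2 := (Real.sqrt_eq_rpow 2).symm
  rw [h6, Real.sqrt_mul (by norm_num) π]
  have hk : (2:ℝ)^k ≠ 0 := by positivity
  field_simp

lemma gaussian_integral_eq (g : ℝ → ℝ) :
    ∫ x, g x ∂(gaussianReal 0 1) = ∫ x, gaussianPDFReal 0 1 x * g x := by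
  rw [gaussianReal_of_var_ne_zero 0 one_ne_zero]
  rw [show gaussianPDF 0 1 = fun x => ((Real.toNNReal (gaussianPDFReal 0 1 x) : ℝ≥0) : ℝ≥0∞)
      from rfl]
  rw [integral_withDensity_eq_integral_smul
      ((measurable_gaussianPDFReal 0 1).real_toNNReal) g]
  congr 1; funext x
  rw [NNReal.smul_def, Real.coe_toNNReal _ (gaussianPDFReal_nonneg 0 1 x), smul_eq_mul]

lemma gaussian_pdf_eq (x : ℝ) :
    gaussianPDFReal 0 1 x = (Real.sqrt (2 * π))⁻¹ * Real.exp (-x ^ 2 / 2) := by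
  simp [gaussianPDFReal]

lemma integrable_pow_gaussian (n : ℕ) :
    Integrable (fun x : ℝ => x ^ n) (gaussianReal 0 1) := by
  rw [gaussianReal_of_var_ne_zero 0 one_ne_zero]
  rw [show gaussianPDF 0 1 = fun x => ((Real.toNNReal (gaussianPDFReal 0 1 x) : ℝ≥0) : ℝ≥0∞)
      from rfl]
  rw [integrable_withDensity_iff_integrable_smul
      ((measurable_gaussianPDFReal 0 1).real_toNNReal)]
  have : (fun x : ℝ => (Real.toNNReal (gaussianPDFReal 0 1 x) : ℝ≥0) • x ^ n)
      = fun x : ℝ => (Real.sqrt (2 * π))⁻¹ * (x ^ ((n : ℕ) : ℝ) * Real.exp (-(1/2) * x ^ 2)) := by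
    funext x
    rw [NNReal.smul_def, Real.coe_toNNReal _ (gaussianPDFReal_nonneg 0 1 x), gaussian_pdf_eq,
      Real.rpow_natCast, smul_eq_mul]
    ring_nf
  rw [this]
  exact (integrable_rpow_mul_exp_neg_mul_sq (by norm_num)
    (lt_of_lt_of_le neg_one_lt_zero (by positivity))).const_mul _

lemma moment_gaussian (k : ℕ) :
    ∫ x, x ^ (2 * k) ∂(gaussianReal 0 1) = Dfac k := by
  rw [gaussian_integral_eq]
  have : (fun x : ℝ => gaussianPDFReal 0 1 x * x ^ (2 * k))
      = fun x : ℝ => (Real.sqrt (2 * π))⁻¹ * (x ^ (2 * k) * Real.exp (-x ^ 2 / 2)) := by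
    funext x; rw [gaussian_pdf_eq]; ring
  rw [this, integral_const_mul, integral_pow_exp, ← mul_assoc,
    inv_mul_cancel₀ (by positivity), one_mul]

noncomputable def Tk (a b : ℝ) (n k : ℕ) : ℝ :=
  (n.choose k : ℝ) * Dfac k * Dfac (n - k) * a ^ k * b ^ (n - k)

noncomputable def Ssum (a b : ℝ) (n : ℕ) : ℝ := ∑ k ∈ Finset.range (n + 1), Tk a b n k

lemma Tk_eq_zero (a b : ℝ) {n k : ℕ} (h : n < k) : Tk a b n k = 0 := by
  simp [Tk, Nat.choose_eq_zero_of_lt h]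

lemma Tk_rec (a b : ℝ) (q k : ℕ) :
    Tk a b (q + 2) (k + 1) =
      (2 * q + 3) * a * Tk a b (q + 1) k + (2 * q + 3) * b * Tk a b (q + 1) (k + 1)
        - 4 * (q + 1) ^ 2 * (a * b) * Tk a b q k := by
  rcases lt_trichotomy k (q + 1) with hk | hk | hk
  · -- k ≤ q
    obtain ⟨m, rfl⟩ : ∃ m, q = k + m := ⟨q - k, by omega⟩
    have e1 : k + m + 2 - (k + 1) = m + 1 := by omega
    have e2 : k + m + 1 - k = m + 1 := by omega
    have e3 : k + m + 1 - (k + 1) = m := by omega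
    have e4 : k + m - k = m := by omega
    simp only [Tk, e1, e2, e3, e4, Dfac_succ]
    have hk1 : ((k : ℝ) + 1) ≠ 0 := by positivity
    have hm1 : ((m : ℝ) + 1) ≠ 0 := by positivity
    -- choose identities
    have n1 : (k + m + 1) * (k + m).choose k = (k + m + 1).choose (k + 1) * (k + 1) :=
      Nat.add_one_mul_choose_eq (k + m) k
    have n3 : (k + m + 2) * (k + m + 1).choose k = (k + m + 2).choose (k + 1) * (k + 1) :=
      Nat.add_one_mul_choose_eq (k + m + 1) k
    have n2 : (k + m + 1) * (k + m).choose k = (k + m + 1).choose k * (m + 1) := by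
      have h1 : (k + m + 1).choose k = (k + m + 1).choose (m + 1) := by
        rw [← Nat.choose_symm (by omega : k ≤ k + m + 1), e2]
      have h2 : (k + m).choose k = (k + m).choose m := by
        rw [← Nat.choose_symm (by omega : k ≤ k + m), e4]
      rw [h1, h2]
      have := Nat.add_one_mul_choose_eq (k + m) m
      simpa [Nat.succ_eq_add_one] using this
    have c1 : ((k + m + 1).choose (k + 1) : ℝ) = (k + m + 1) * ((k + m).choose k : ℝ) / (k + 1) := by
      rw [eq_div_iff hk1]; exact_mod_cast congrArg (Nat.cast (R := ℝ)) n1.symm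
    have c2 : ((k + m + 1).choose k : ℝ) = (k + m + 1) * ((k + m).choose k : ℝ) / (m + 1) := by
      rw [eq_div_iff hm1]; exact_mod_cast congrArg (Nat.cast (R := ℝ)) n2.symm
    have c3 : ((k + m + 2).choose (k + 1) : ℝ)
        = (k + m + 2) * ((k + m + 1).choose k : ℝ) / (k + 1) := by
      rw [eq_div_iff hk1]; exact_mod_cast congrArg (Nat.cast (R := ℝ)) n3.symm
    rw [c3, c2, c1]
    push_cast
    field_simp
    ring
  · -- k = q + 1
    subst hk
    rw [Tk_eq_zero a b (by omega : q + 1 < q + 1 + 1), Tk_eq_zero a b (by omega : q < q + 1)]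
    simp only [Tk, Nat.choose_self, Nat.sub_self, pow_zero, Dfac_succ]
    push_cast
    simp [Dfac]
    ring
  · -- k ≥ q + 2
    rw [Tk_eq_zero a b (by omega : q + 2 < k + 1), Tk_eq_zero a b (by omega : q + 1 < k),
      Tk_eq_zero a b (by omega : q + 1 < k + 1), Tk_eq_zero a b (by omega : q < k)]
    ring

lemma Ssum_rec (a b : ℝ) (q : ℕ) :
    Ssum a b (q + 2) = (2 * q + 3) * (a + b) * Ssum a b (q + 1)
      - 4 * (q + 1) ^ 2 * (a * b) * Ssum a b q := by
  have h0 : Tk a b (q + 2) 0 = (2 * q + 3) * b * Tk a b (q + 1) 0 := by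
    simp only [Tk, Nat.choose_zero_right, Nat.sub_zero, pow_zero, Nat.cast_one]
    rw [show q + 2 = (q + 1) + 1 from rfl, Dfac_succ]
    push_cast; ring
  have hB : ∑ k ∈ Finset.range (q + 2), Tk a b (q + 1) (k + 1)
      = Ssum a b (q + 1) - Tk a b (q + 1) 0 := by
    rw [Finset.sum_range_succ, Tk_eq_zero a b (by omega : q + 1 < q + 1 + 1), add_zero]
    have h := Finset.sum_range_succ' (fun k => Tk a b (q + 1) k) (q + 1)
    simp only [Ssum]
    rw [h]; ring
  have hC : ∑ k ∈ Finset.range (q + 2), Tk a b q k = Ssum a b q := by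
    rw [Finset.sum_range_succ, Tk_eq_zero a b (by omega : q < q + 1), add_zero]; rfl
  have hA : ∑ k ∈ Finset.range (q + 2), Tk a b (q + 1) k = Ssum a b (q + 1) := rfl
  have expand : Ssum a b (q + 2)
      = (∑ k ∈ Finset.range (q + 2), ((2 * q + 3) * a * Tk a b (q + 1) k
          + (2 * q + 3) * b * Tk a b (q + 1) (k + 1)
          - 4 * (q + 1) ^ 2 * (a * b) * Tk a b q k)) + Tk a b (q + 2) 0 := by
    simp only [Ssum]
    rw [Finset.sum_range_succ' (fun k => Tk a b (q + 2) k) (q + 2)]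
    congr 1
    exact Finset.sum_congr rfl fun k _ => Tk_rec a b q k
  rw [expand, Finset.sum_sub_distrib, Finset.sum_add_distrib, ← Finset.mul_sum, ← Finset.mul_sum,
    ← Finset.mul_sum, hA, hB, hC, h0]
  ring

lemma Ssum_eq (s t : ℝ) (hst : s * t > 0) (hst1 : s ^ 2 + t ^ 2 = 1) (q : ℕ) :
    Ssum (t ^ 2) (s ^ 2) q
      = (Nat.factorial q : ℝ) * (2 * s * t) ^ q * legendre q (1 / (2 * s * t)) := by
  have h2st : (2 * s * t : ℝ) ≠ 0 := by
    intro h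
    rw [show (2:ℝ) * s * t = 2 * (s * t) by ring] at h
    nlinarith
  have key : ∀ n : ℕ,
      Ssum (t ^ 2) (s ^ 2) n
        = (Nat.factorial n : ℝ) * (2 * s * t) ^ n * legendre n (1 / (2 * s * t)) ∧
      Ssum (t ^ 2) (s ^ 2) (n + 1)
        = (Nat.factorial (n + 1) : ℝ) * (2 * s * t) ^ (n + 1) * legendre (n + 1) (1 / (2 * s * t)) := by
    intro n
    induction n with
    | zero =>
        constructor
        · simp [Ssum, Tk, Dfac, legendre]
        · have : Ssum (t ^ 2) (s ^ 2) 1 = s ^ 2 + t ^ 2 := by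
            simp [Ssum, Finset.sum_range_succ, Tk, Dfac]
          rw [this, hst1]
          simp only [legendre, Nat.factorial_one, Nat.cast_one, pow_one]
          field_simp
          have hst0 : s * t ≠ 0 := ne_of_gt hst
          rw [eq_div_iff hst0]
          simp only [zero_add, Nat.factorial_one, Nat.cast_one, pow_one]
          ring
    | succ n ih =>
        refine ⟨ih.2, ?_⟩
        rw [show n + 1 + 1 = n + 2 from rfl, Ssum_rec]
        rw [ih.1, ih.2]
        have hL : legendre (n + 2) (1 / (2 * s * t))
            = ((2 * n + 3) * (1 / (2 * s * t)) * legendre (n + 1) (1 / (2 * s * t))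
                - (n + 1) * legendre n (1 / (2 * s * t))) / (n + 2) := rfl
    
        have hab : (t ^ 2 : ℝ) + s ^ 2 = 1 := by linarith
        have hab2 : (t ^ 2 : ℝ) * s ^ 2 = (s * t) ^ 2 := by ring
        rw [hab, hab2, hL]
        rw [Nat.factorial_succ (n + 1), Nat.factorial_succ n]
        generalize legendre (n + 1) (1 / (2 * s * t)) = A
        generalize legendre n (1 / (2 * s * t)) = B
        have hs : s ≠ 0 := by rintro rfl; simp at hst
        have ht : t ≠ 0 := by rintro rfl; simp at hst
        push_cast
        have hn2 : ((n : ℝ) + 2) ≠ 0 := by positivity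
        field_simp
        ring
  exact (key q).1

/-- For `X, Y` independent standard real Gaussians and real `s, t` with
`st > 0` and `s² + t² = 1`, one has `E[|tX + isY|^{2q}] = q! (2st)^q L_q(1/(2st))`. -/
theorem expectation_abs_pow_eq_legendre (q : ℕ) (s t : ℝ) (hst : s * t > 0)
    (hst1 : s ^ 2 + t ^ 2 = 1) :
    ∫ p : ℝ × ℝ, ‖(t * p.1 + s * p.2 * Complex.I : ℂ)‖ ^ (2 * q)
        ∂((gaussianReal 0 1).prod (gaussianReal 0 1)) =
      (Nat.factorial q : ℝ) * (2 * s * t) ^ q * legendre q (1 / (2 * s * t)) := by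
  have habs : ∀ p : ℝ × ℝ, ‖(t * p.1 + s * p.2 * Complex.I : ℂ)‖ ^ (2 * q)
      = (t ^ 2 * p.1 ^ 2 + s ^ 2 * p.2 ^ 2) ^ q := by
    intro p
    rw [pow_mul, Complex.sq_norm]
    congr 1
    simp [Complex.normSq_apply]
    ring
  simp only [habs]
  have hexp : ∀ p : ℝ × ℝ, (t ^ 2 * p.1 ^ 2 + s ^ 2 * p.2 ^ 2) ^ q
      = ∑ k ∈ Finset.range (q + 1),
          ((t ^ 2) ^ k * p.1 ^ (2 * k)) * ((s ^ 2) ^ (q - k) * p.2 ^ (2 * (q - k)))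
            * (q.choose k : ℝ) := by
    intro p
    rw [add_pow]
    refine Finset.sum_congr rfl fun k _ => ?_
    rw [mul_pow, mul_pow, ← pow_mul, ← pow_mul]
    ring
  simp only [hexp]
  rw [integral_finset_sum]
  · have hterm : ∀ k, (∫ p : ℝ × ℝ,
        ((t ^ 2) ^ k * p.1 ^ (2 * k)) * ((s ^ 2) ^ (q - k) * p.2 ^ (2 * (q - k)))
          * (q.choose k : ℝ) ∂((gaussianReal 0 1).prod (gaussianReal 0 1)))
        = Tk (t ^ 2) (s ^ 2) q k := by
      intro k
      have : (fun p : ℝ × ℝ =>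
          ((t ^ 2) ^ k * p.1 ^ (2 * k)) * ((s ^ 2) ^ (q - k) * p.2 ^ (2 * (q - k)))
            * (q.choose k : ℝ))
          = fun p : ℝ × ℝ =>
            (fun x : ℝ => ((t ^ 2) ^ k * (q.choose k : ℝ)) * x ^ (2 * k)) p.1
              * (fun y : ℝ => (s ^ 2) ^ (q - k) * y ^ (2 * (q - k))) p.2 := by
        funext p; ring
      rw [this, integral_prod_mul (μ := gaussianReal 0 1) (ν := gaussianReal 0 1)
        (f := fun x : ℝ => ((t ^ 2) ^ k * (q.choose k : ℝ)) * x ^ (2 * k))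
        (g := fun y : ℝ => (s ^ 2) ^ (q - k) * y ^ (2 * (q - k))),
        integral_const_mul, integral_const_mul, moment_gaussian, moment_gaussian, Tk]
      ring
    rw [show (∑ k ∈ Finset.range (q + 1), ∫ p : ℝ × ℝ,
        ((t ^ 2) ^ k * p.1 ^ (2 * k)) * ((s ^ 2) ^ (q - k) * p.2 ^ (2 * (q - k)))
          * (q.choose k : ℝ) ∂((gaussianReal 0 1).prod (gaussianReal 0 1)))
        = Ssum (t ^ 2) (s ^ 2) q from Finset.sum_congr rfl fun k _ => hterm k]
    exact Ssum_eq s t hst hst1 q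
  · intro k _
    exact (((integrable_pow_gaussian (2 * k)).const_mul ((t ^ 2) ^ k)).mul_prod
      ((integrable_pow_gaussian (2 * (q - k))).const_mul ((s ^ 2) ^ (q - k)))).mul_const _
end

section
/- For every integer q ≥ 2, the function x ↦ q! x^{-q} L_q(x) is strictly increasing on [1, ∞), equals q! at x = 1, and tends to (2q-1)!! as x → ∞. -/
open Filter

noncomputable def legendreD : ℕ → ℝ → ℝ
  | 0, _ => 0
  | 1, _ => 1
  | n + 2, x =>
      ((2 * n + 3) * (legendre (n + 1) x + x * legendreD (n + 1) x)
        - (n + 1) * legendreD n x) / (n + 2)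

lemma legendre_add_two (n : ℕ) (x : ℝ) :
    legendre (n + 2) x
      = ((2 * n + 3) * x * legendre (n + 1) x - (n + 1) * legendre n x) / (n + 2) := rfl

lemma legendreD_add_two (n : ℕ) (x : ℝ) :
    legendreD (n + 2) x
      = ((2 * n + 3) * (legendre (n + 1) x + x * legendreD (n + 1) x)
          - (n + 1) * legendreD n x) / (n + 2) := rfl

lemma nat_cast_add_two_ne (n : ℕ) : ((n : ℝ) + 2) ≠ 0 := by positivity

lemma legendre_rec (n : ℕ) (x : ℝ) :
    ((n : ℝ) + 2) * legendre (n + 2) x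
      = (2 * n + 3) * x * legendre (n + 1) x - (n + 1) * legendre n x := by
  rw [legendre_add_two]
  field_simp

lemma legendreD_rec (n : ℕ) (x : ℝ) :
    ((n : ℝ) + 2) * legendreD (n + 2) x
      = (2 * n + 3) * (legendre (n + 1) x + x * legendreD (n + 1) x)
        - (n + 1) * legendreD n x := by
  rw [legendreD_add_two]
  field_simp

lemma legendre_hasDerivAt (n : ℕ) (x : ℝ) :
    HasDerivAt (legendre n) (legendreD n x) x := by
  induction n using Nat.twoStepInduction generalizing x with
  | zero =>
    have h : legendre 0 = fun _ : ℝ => (1 : ℝ) := funext fun _ => rfl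
    rw [h]
    exact hasDerivAt_const x (1 : ℝ)
  | one =>
    have h : legendre 1 = fun y : ℝ => y := funext fun _ => rfl
    rw [h]
    exact hasDerivAt_id' x
  | more n ih0 ih1 =>
    have h : legendre (n + 2)
        = fun y : ℝ => ((2 * (n : ℝ) + 3) * y * legendre (n + 1) y
            - ((n : ℝ) + 1) * legendre n y) / ((n : ℝ) + 2) :=
      funext fun y => legendre_add_two n y
    rw [h]
    have hd := ((((hasDerivAt_id x).const_mul ((2 * (n : ℝ) + 3))).mul (ih1 x)).sub
      ((ih0 x).const_mul ((n : ℝ) + 1))).div_const ((n : ℝ) + 2)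
    simp only [id_eq] at hd
    rw [legendreD_add_two]
    exact hd.congr_deriv (by ring)

lemma legendre_continuous (n : ℕ) : Continuous (legendre n) := by
  have hdiff : Differentiable ℝ (legendre n) := fun x => (legendre_hasDerivAt n x).differentiableAt
  exact hdiff.continuous

/-- the derivative identity `(x²-1) L_q' = q (x L_q - L_{q-1})`. -/
lemma legendre_deriv_ident (n : ℕ) (x : ℝ) :
    (x ^ 2 - 1) * legendreD (n + 1) x
      = ((n : ℝ) + 1) * (x * legendre (n + 1) x - legendre n x) := by
  induction n using Nat.twoStepInduction generalizing x with
  | zero =>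
    show (x ^ 2 - 1) * legendreD 1 x = ((0 : ℕ) + 1 : ℝ) * (x * legendre 1 x - legendre 0 x)
    show (x ^ 2 - 1) * 1 = _
    show _ = _ * (x * x - 1)
    push_cast
    ring
  | one =>
    have h2 := legendreD_rec 0 x
    have e2 := legendre_rec 0 x
    norm_num at h2 e2
    rw [show legendreD 1 x = 1 from rfl, show legendreD 0 x = 0 from rfl,
      show legendre 1 x = x from rfl] at h2
    rw [show legendre 1 x = x from rfl, show legendre 0 x = 1 from rfl] at e2
    rw [show legendre 1 x = x from rfl]
    push_cast
    linear_combination (x ^ 2 - 1) / 2 * h2 - x * e2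
  | more n ih0 ih1 =>
    have H1 := ih0 x
    have H2 := ih1 x
    have E2 := legendre_rec n x
    have E3 := legendre_rec (n + 1) x
    have Ed3 := legendreD_rec (n + 1) x
    push_cast at H1 H2 E2 E3 Ed3 ⊢
    have h3 : ((n : ℝ) + 3) ≠ 0 := by positivity
    have key : ((n : ℝ) + 3) * ((x ^ 2 - 1) * legendreD (n + 3) x)
        = ((n : ℝ) + 3) * (((n : ℝ) + 3) * (x * legendre (n + 3) x - legendre (n + 2) x)) := by
      linear_combination (x ^ 2 - 1) * Ed3 + (2 * (n : ℝ) + 5) * x * H2 - ((n : ℝ) + 2) * H1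
        - ((n : ℝ) + 3) * x * E3 + ((n : ℝ) + 2) * E2
    have key2 := mul_left_cancel₀ h3 key
    linear_combination key2

lemma legendre_ge (n : ℕ) (x : ℝ) (hx : 1 ≤ x) :
    x ^ n ≤ legendre n x ∧ x * legendre n x ≤ legendre (n + 1) x ∧
      (1 < x → x * legendre (n + 1) x < legendre (n + 2) x) := by
  have hx0 : (0 : ℝ) < x := by linarith
  induction n with
  | zero =>
    refine ⟨by simp [legendre], by simp [legendre], fun h => ?_⟩
    have E := legendre_rec 0 x
    push_cast at E
    have hL1 : legendre 1 x = x := rfl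
    have hL0 : legendre 0 x = 1 := rfl
    rw [hL1, hL0] at E
    nlinarith [E]
  | succ n ih =>
    obtain ⟨ih1, ih2, _⟩ := ih
    have hxn : (0 : ℝ) < x ^ n := pow_pos hx0 n
    have hxn1 : (1 : ℝ) ≤ x ^ n := one_le_pow₀ hx
    have hLn : 0 < legendre n x := lt_of_lt_of_le hxn ih1
    have c1 : x ^ (n + 1) ≤ legendre (n + 1) x := by
      have : x * x ^ n ≤ x * legendre n x := by nlinarith
      rw [pow_succ]
      nlinarith
    have hLn1 : 0 < legendre (n + 1) x := lt_of_lt_of_le (pow_pos hx0 (n + 1)) c1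
    have E := legendre_rec n x
    have c2 : x * legendre (n + 1) x ≤ legendre (n + 2) x := by
      have hΔ : legendre (n + 2) x - x * legendre (n + 1) x
          = (((n : ℝ) + 1) * (x * (legendre (n + 1) x - x * legendre n x)
              + (x ^ 2 - 1) * legendre n x)) / ((n : ℝ) + 2) := by
        rw [eq_div_iff (nat_cast_add_two_ne n)]
        linear_combination E
      have t1 : 0 ≤ x * (legendre (n + 1) x - x * legendre n x) :=
        mul_nonneg hx0.le (by linarith)
      have t2 : 0 ≤ (x ^ 2 - 1) * legendre n x := mul_nonneg (by nlinarith) hLn.le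
      have hnum : 0 ≤ ((n : ℝ) + 1) * (x * (legendre (n + 1) x - x * legendre n x)
          + (x ^ 2 - 1) * legendre n x) :=
        mul_nonneg (by positivity) (by linarith)
      have := div_nonneg hnum (by positivity : (0 : ℝ) ≤ (n : ℝ) + 2)
      linarith [hΔ ▸ this]
    refine ⟨c1, c2, fun h => ?_⟩
    have E3 := legendre_rec (n + 1) x
    push_cast at E3
    have hΔ : legendre (n + 3) x - x * legendre (n + 2) x
        = (((n : ℝ) + 2) * (x * (legendre (n + 2) x - x * legendre (n + 1) x)
            + (x ^ 2 - 1) * legendre (n + 1) x)) / ((n : ℝ) + 3) := by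
      rw [eq_div_iff (by positivity : ((n : ℝ) + 3) ≠ 0)]
      linear_combination E3
    have t1 : 0 ≤ x * (legendre (n + 2) x - x * legendre (n + 1) x) :=
      mul_nonneg hx0.le (by linarith)
    have t2 : 0 < (x ^ 2 - 1) * legendre (n + 1) x := mul_pos (by nlinarith) hLn1
    have hnum : 0 < ((n : ℝ) + 2) * (x * (legendre (n + 2) x - x * legendre (n + 1) x)
        + (x ^ 2 - 1) * legendre (n + 1) x) := mul_pos (by positivity) (by linarith)
    have := div_pos hnum (by positivity : (0 : ℝ) < (n : ℝ) + 3)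
    linarith [hΔ ▸ this]

lemma legendre_one_val (n : ℕ) : legendre n 1 = 1 := by
  induction n using Nat.twoStepInduction with
  | zero => rfl
  | one => rfl
  | more n ih0 ih1 =>
    rw [legendre_add_two, ih0, ih1]
    field_simp
    ring

set_option maxHeartbeats 1000000 in
lemma legendre_tendsto (n : ℕ) :
    Tendsto (fun x : ℝ => legendre n x / x ^ n) atTop
      (nhds ((Nat.doubleFactorial (2 * n - 1) : ℝ) / (Nat.factorial n : ℝ))) := by
  induction n using Nat.twoStepInduction with
  | zero =>
    simp [legendre]
  | one =>
    have heq : (fun _ : ℝ => (1 : ℝ)) =ᶠ[atTop] fun x : ℝ => legendre 1 x / x ^ 1 := by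
      filter_upwards [eventually_gt_atTop (0 : ℝ)] with x hx
      have : legendre 1 x = x := rfl
      rw [this]
      field_simp
    have : Tendsto (fun x : ℝ => legendre 1 x / x ^ 1) atTop (nhds 1) :=
      tendsto_const_nhds.congr' heq
    convert this using 2
    norm_num [Nat.doubleFactorial]
  | more n ih0 ih1 =>
    have hx2 : Tendsto (fun x : ℝ => (x ^ 2)⁻¹) atTop (nhds 0) :=
      (tendsto_pow_atTop (two_ne_zero)).inv_tendsto_atTop
    have hT : Tendsto (fun x : ℝ =>
        ((2 * (n : ℝ) + 3) * (legendre (n + 1) x / x ^ (n + 1))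
          - (((n : ℝ) + 1) * (legendre n x / x ^ n)) * (x ^ 2)⁻¹) / ((n : ℝ) + 2)) atTop
        (nhds (((2 * (n : ℝ) + 3) * ((Nat.doubleFactorial (2 * (n + 1) - 1) : ℝ)
            / (Nat.factorial (n + 1) : ℝ))
          - (((n : ℝ) + 1) * ((Nat.doubleFactorial (2 * n - 1) : ℝ) / (Nat.factorial n : ℝ))) * 0)
            / ((n : ℝ) + 2))) :=
      (((ih1.const_mul _).sub ((ih0.const_mul _).mul hx2)).div_const _)
    have heq : (fun x : ℝ =>
        ((2 * (n : ℝ) + 3) * (legendre (n + 1) x / x ^ (n + 1))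
          - (((n : ℝ) + 1) * (legendre n x / x ^ n)) * (x ^ 2)⁻¹) / ((n : ℝ) + 2))
        =ᶠ[atTop] fun x : ℝ => legendre (n + 2) x / x ^ (n + 2) := by
      filter_upwards [eventually_gt_atTop (0 : ℝ)] with x hx
      rw [legendre_add_two]
      have hx0 : x ≠ 0 := ne_of_gt hx
      rw [div_eq_div_iff (nat_cast_add_two_ne n) (pow_ne_zero (n + 2) hx0)]
      field_simp
      ring
    have hval : ((2 * (n : ℝ) + 3) * ((Nat.doubleFactorial (2 * (n + 1) - 1) : ℝ)
          / (Nat.factorial (n + 1) : ℝ))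
        - (((n : ℝ) + 1) * ((Nat.doubleFactorial (2 * n - 1) : ℝ) / (Nat.factorial n : ℝ))) * 0)
          / ((n : ℝ) + 2)
        = (Nat.doubleFactorial (2 * (n + 2) - 1) : ℝ) / (Nat.factorial (n + 2) : ℝ) := by
      have e1 : 2 * (n + 1) - 1 = 2 * n + 1 := by omega
      have e2 : 2 * (n + 2) - 1 = 2 * n + 1 + 2 := by omega
      rw [e1, e2, Nat.doubleFactorial_add_two]
      have hf : (Nat.factorial n : ℝ) ≠ 0 := Nat.cast_ne_zero.mpr (Nat.factorial_ne_zero n)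
      have hf1 : ((Nat.factorial (n + 1) : ℕ) : ℝ) = ((n : ℝ) + 1) * (Nat.factorial n : ℝ) := by
        rw [Nat.factorial_succ]; push_cast; ring
      have hf2 : ((Nat.factorial (n + 2) : ℕ) : ℝ)
          = ((n : ℝ) + 2) * (((n : ℝ) + 1) * (Nat.factorial n : ℝ)) := by
        rw [Nat.factorial_succ, Nat.factorial_succ]; push_cast; ring
      rw [hf1, hf2]
      push_cast
      field_simp
      ring
    rw [hval] at hT
    exact hT.congr' heq

/-- For every integer `q ≥ 2`, the function `x ↦ q! x^{-q} L_q(x)` is strictly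
increasing on `[1, ∞)`, equals `q!` at `x = 1`, and tends to `(2q-1)!!` as `x → ∞`. -/
theorem factorial_mul_legendre_div_pow_strictMono (q : ℕ) (hq : 2 ≤ q) :
    StrictMonoOn (fun x : ℝ => (Nat.factorial q : ℝ) * legendre q x / x ^ q) (Set.Ici 1) ∧
    (Nat.factorial q : ℝ) * legendre q 1 / 1 ^ q = (Nat.factorial q : ℝ) ∧
    Tendsto (fun x : ℝ => (Nat.factorial q : ℝ) * legendre q x / x ^ q) atTop
      (nhds (Nat.doubleFactorial (2 * q - 1) : ℝ)) := by
  obtain ⟨m, rfl⟩ : ∃ m, q = m + 2 := ⟨q - 2, by omega⟩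
  set q := m + 2 with hqdef
  have hfact : (0 : ℝ) < (Nat.factorial q : ℝ) := by positivity
  refine ⟨?_, ?_, ?_⟩
  · -- strict monotonicity
    apply strictMonoOn_of_deriv_pos (convex_Ici 1)
    · exact ((continuous_const.mul (legendre_continuous q)).continuousOn).div
        (continuous_pow q).continuousOn
        (fun x hx => pow_ne_zero q (by
          have : (1 : ℝ) ≤ x := hx
          positivity))
    · intro x hx
      rw [interior_Ici] at hx
      have hx1 : (1 : ℝ) < x := hx
      have hx0 : (0 : ℝ) < x := by linarith
      have hder : HasDerivAt (fun x : ℝ => (Nat.factorial q : ℝ) * legendre q x / x ^ q)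
          ((((Nat.factorial q : ℝ)) * legendreD q x * x ^ q
            - (Nat.factorial q : ℝ) * legendre q x * ((q : ℝ) * x ^ (q - 1))) / (x ^ q) ^ 2) x :=
        ((legendre_hasDerivAt q x).const_mul _).div (hasDerivAt_pow q x)
          (pow_ne_zero q (ne_of_gt hx0))
      rw [hder.deriv]
      have hD : 0 < legendre (m + 2) x - x * legendre (m + 1) x := by
        have := (legendre_ge m x hx1.le).2.2 hx1
        linarith
      have hident := legendre_deriv_ident (m + 1) x
      push_cast at hident
      have hx2 : (0 : ℝ) < x ^ 2 - 1 := by nlinarith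
      have hprod : (x ^ 2 - 1) * (x * legendreD (m + 2) x - ((m : ℝ) + 2) * legendre (m + 2) x)
          = ((m : ℝ) + 2) * (legendre (m + 2) x - x * legendre (m + 1) x) := by
        linear_combination x * hident
      have hpos : 0 < (x ^ 2 - 1) * (x * legendreD (m + 2) x
          - ((m : ℝ) + 2) * legendre (m + 2) x) := by
        rw [hprod]
        exact mul_pos (by positivity) hD
      have h1 : 0 < x * legendreD (m + 2) x - ((m : ℝ) + 2) * legendre (m + 2) x := by
        nlinarith [hpos, hx2]
      have hnum : (Nat.factorial q : ℝ) * legendreD q x * x ^ q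
          - (Nat.factorial q : ℝ) * legendre q x * ((q : ℝ) * x ^ (q - 1))
          = (Nat.factorial q : ℝ) * x ^ (m + 1)
            * (x * legendreD (m + 2) x - ((m : ℝ) + 2) * legendre (m + 2) x) := by
        show (Nat.factorial q : ℝ) * legendreD (m + 2) x * x ^ (m + 2)
            - (Nat.factorial q : ℝ) * legendre (m + 2) x * (((m + 2 : ℕ) : ℝ) * x ^ (m + 1)) = _
        push_cast
        rw [pow_succ]
        ring
      rw [hnum]
      exact div_pos (mul_pos (mul_pos hfact (pow_pos hx0 (m + 1))) h1)
        (by positivity)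
  · rw [legendre_one_val]
    norm_num
  · have h := (legendre_tendsto q).const_mul ((Nat.factorial q : ℝ))
    have hval : (Nat.factorial q : ℝ)
        * ((Nat.doubleFactorial (2 * q - 1) : ℝ) / (Nat.factorial q : ℝ))
        = (Nat.doubleFactorial (2 * q - 1) : ℝ) := by
      field_simp
    rw [hval] at h
    simpa [mul_div_assoc] using h
end

section
/- Let O be a Haar-distributed orthogonal matrix in O(N). Then for natural numbers k, j, E[O_{11}^{2k} O_{21}^{2j}] = (2k-1)!! (2j-1)!! / (N(N+2)⋯(N+2k+2j-2)). -/
open MeasureTheory Real intervalIntegral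

noncomputable instance matrixMeasurableSpace (N : ℕ) :
    MeasurableSpace (Matrix (Fin N) (Fin N) ℝ) :=
  MeasurableSpace.pi

noncomputable def Tcs (k j : ℕ) : ℝ := ∫ θ in (0:ℝ)..(2*π), cos θ ^ (2*k) * sin θ ^ (2*j)

lemma Tcs_zero_zero : Tcs 0 0 = 2 * π := by
  simp [Tcs]

-- integration by parts relation: (2k+1) * Tcs k (j+1) = (2j+1) * Tcs (k+1) j
lemma Tcs_rec (k j : ℕ) : (2*(k:ℝ)+1) * Tcs k (j+1) = (2*(j:ℝ)+1) * Tcs (k+1) j := by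
  have key : ∀ θ : ℝ, HasDerivAt (fun θ => sin θ ^ (2*j+1) * cos θ ^ (2*k+1))
      ((2*(j:ℝ)+1) * (cos θ ^ (2*(k+1)) * sin θ ^ (2*j))
        - (2*(k:ℝ)+1) * (cos θ ^ (2*k) * sin θ ^ (2*(j+1)))) θ := by
    intro θ
    have h1 : HasDerivAt (fun θ => sin θ ^ (2*j+1)) ((2*j+1) * sin θ ^ (2*j) * cos θ) θ := by
      simpa using ((hasDerivAt_sin θ).fun_pow (2*j+1))
    have h2 : HasDerivAt (fun θ => cos θ ^ (2*k+1)) ((2*k+1) * cos θ ^ (2*k) * (-sin θ)) θ := by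
      simpa using ((hasDerivAt_cos θ).fun_pow (2*k+1))
    have := h1.fun_mul h2
    refine this.congr_deriv ?_
    push_cast
    ring
  have hint : ∫ θ in (0:ℝ)..(2*π), ((2*(j:ℝ)+1) * (cos θ ^ (2*(k+1)) * sin θ ^ (2*j))
        - (2*(k:ℝ)+1) * (cos θ ^ (2*k) * sin θ ^ (2*(j+1)))) = 0 := by
    rw [integral_eq_sub_of_hasDerivAt (fun θ _ => key θ)]
    · simp [Real.sin_two_pi, Real.cos_two_pi]
    · apply Continuous.intervalIntegrable
      continuity
  rw [intervalIntegral.integral_sub, intervalIntegral.integral_const_mul,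
    intervalIntegral.integral_const_mul, sub_eq_zero] at hint
  · rw [Tcs, Tcs]; linarith
  · apply Continuous.intervalIntegrable; continuity
  · apply Continuous.intervalIntegrable; continuity

lemma Tcs_pos (k j : ℕ) : 0 < Tcs k j := by
  have hc : Continuous fun θ : ℝ => cos θ ^ (2*k) * sin θ ^ (2*j) := by continuity
  have h1 : (0:ℝ) < ∫ θ in (0:ℝ)..(π/2), cos θ ^ (2*k) * sin θ ^ (2*j) := by
    apply intervalIntegral.intervalIntegral_pos_of_pos_on (hc.intervalIntegrable _ _)
    · intro x hx
      have hcos : 0 < cos x := Real.cos_pos_of_mem_Ioo ⟨by linarith [hx.1, pi_pos], hx.2⟩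
      have hsin : 0 < sin x := Real.sin_pos_of_pos_of_lt_pi hx.1 (by linarith [hx.2, pi_pos])
      positivity
    · linarith [pi_pos]
  have h2 : (0:ℝ) ≤ ∫ θ in (π/2:ℝ)..(2*π), cos θ ^ (2*k) * sin θ ^ (2*j) := by
    apply intervalIntegral.integral_nonneg (by linarith [pi_pos])
    intro x _
    have : (0:ℝ) ≤ cos x ^ (2*k) := by
      simpa [pow_mul] using pow_nonneg (sq_nonneg (cos x)) k
    have : (0:ℝ) ≤ sin x ^ (2*j) := by
      simpa [pow_mul] using pow_nonneg (sq_nonneg (sin x)) j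
    positivity
  have h3 : Tcs k j = (∫ θ in (0:ℝ)..(π/2), cos θ ^ (2*k) * sin θ ^ (2*j))
      + ∫ θ in (π/2:ℝ)..(2*π), cos θ ^ (2*k) * sin θ ^ (2*j) := by
    rw [Tcs, intervalIntegral.integral_add_adjacent_intervals (hc.intervalIntegrable _ _)
      (hc.intervalIntegrable _ _)]
  rw [h3]; linarith

lemma df_succ (k : ℕ) : (Nat.doubleFactorial (2*k+1) : ℝ)
    = (2*(k:ℝ)+1) * Nat.doubleFactorial (2*k-1) := by
  cases k with
  | zero => simp [Nat.doubleFactorial]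
  | succ n =>
    have h1 : 2*(n+1)+1 = (2*n+1)+2 := by ring
    have h2 : 2*(n+1)-1 = 2*n+1 := by omega
    rw [h1, h2, Nat.doubleFactorial]
    push_cast
    ring

lemma Tcs_df (k j : ℕ) : (Nat.doubleFactorial (2*(k+j)-1) : ℝ) * Tcs k j
    = (Nat.doubleFactorial (2*k-1) : ℝ) * (Nat.doubleFactorial (2*j-1) : ℝ) * Tcs (k+j) 0 := by
  induction j generalizing k with
  | zero => simp [Nat.doubleFactorial]
  | succ j ih =>
    have h2k : (2*(k:ℝ)+1) ≠ 0 := by positivity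
    apply mul_left_cancel₀ h2k
    have e1 : 2*(k+(j+1))-1 = 2*((k+1)+j)-1 := by omega
    have e2 : k+(j+1) = (k+1)+j := by omega
    calc (2*(k:ℝ)+1) * ((Nat.doubleFactorial (2*(k+(j+1))-1) : ℝ) * Tcs k (j+1))
        = (Nat.doubleFactorial (2*((k+1)+j)-1) : ℝ) * ((2*(k:ℝ)+1) * Tcs k (j+1)) := by
          rw [e1]; ring
      _ = (Nat.doubleFactorial (2*((k+1)+j)-1) : ℝ) * ((2*(j:ℝ)+1) * Tcs (k+1) j) := by
          rw [Tcs_rec]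
      _ = (2*(j:ℝ)+1) * ((Nat.doubleFactorial (2*((k+1)+j)-1) : ℝ) * Tcs (k+1) j) := by ring
      _ = (2*(j:ℝ)+1) * ((Nat.doubleFactorial (2*(k+1)-1) : ℝ)
            * (Nat.doubleFactorial (2*j-1) : ℝ) * Tcs ((k+1)+j) 0) := by rw [ih]
      _ = (2*(k:ℝ)+1) * ((Nat.doubleFactorial (2*k-1) : ℝ)
            * (Nat.doubleFactorial (2*(j+1)-1) : ℝ) * Tcs (k+(j+1)) 0) := by
          rw [e2]
          have d1 : (Nat.doubleFactorial (2*(k+1)-1) : ℝ)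
              = (2*(k:ℝ)+1) * Nat.doubleFactorial (2*k-1) := by
            have : 2*(k+1)-1 = 2*k+1 := by omega
            rw [this, df_succ]
          have d2 : (Nat.doubleFactorial (2*(j+1)-1) : ℝ)
              = (2*(j:ℝ)+1) * Nat.doubleFactorial (2*j-1) := by
            have : 2*(j+1)-1 = 2*j+1 := by omega
            rw [this, df_succ]
          rw [d1, d2]; ring

lemma circle_avg (k j : ℕ) (x y : ℝ) :
    ∫ θ in (0:ℝ)..(2*π), (cos θ * x - sin θ * y)^(2*k) * (sin θ * x + cos θ * y)^(2*j)
      = (x^2+y^2)^(k+j) * Tcs k j := by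
  by_cases hxy : x = 0 ∧ y = 0
  · obtain ⟨hx, hy⟩ := hxy; subst hx; subst hy
    rcases Nat.eq_zero_or_pos (k+j) with hkj | hkj
    · obtain ⟨hk, hj⟩ : k = 0 ∧ j = 0 := by omega
      subst hk; subst hj; simp [Tcs]
    · have h1 : ∀ θ : ℝ, (cos θ * 0 - sin θ * 0)^(2*k) * (sin θ * 0 + cos θ * 0)^(2*j) = 0 := by
        intro θ
        rcases Nat.eq_zero_or_pos k with hk | hk
        · have hj : 0 < j := by omega
          simp [hk, zero_pow (by omega : 2*j ≠ 0)]
        · simp [zero_pow (by omega : 2*k ≠ 0)]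
      simp only [h1, intervalIntegral.integral_zero]
      rw [show ((0:ℝ)^2+0^2) = 0 by norm_num, zero_pow (show k+j ≠ 0 by omega), zero_mul]
  · set z : ℂ := ⟨x, y⟩ with hz
    have hz0 : z ≠ 0 := by
      simp only [ne_eq, Complex.ext_iff, Complex.zero_re, Complex.zero_im, hz]
      tauto
    set r : ℝ := ‖z‖ with hr
    set φ : ℝ := Complex.arg z with hφ
    have hr0 : r ≠ 0 := by simpa [hr] using (norm_ne_zero_iff.mpr hz0)
    have hx : x = r * cos φ := by
      rw [hφ, Complex.cos_arg hz0]; field_simp [hr, hz]; rw [hr]; exact mul_comm _ _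
    have hy : y = r * sin φ := by
      rw [hφ, Complex.sin_arg]; field_simp [hr, hz]; rw [hr]; exact mul_comm _ _
    have hinteg : ∀ θ : ℝ, (cos θ * x - sin θ * y)^(2*k) * (sin θ * x + cos θ * y)^(2*j)
        = r^(2*(k+j)) * (cos (θ+φ) ^ (2*k) * sin (θ+φ) ^ (2*j)) := by
      intro θ
      have e1 : cos θ * x - sin θ * y = r * cos (θ+φ) := by
        rw [hx, hy, Real.cos_add]; ring
      have e2 : sin θ * x + cos θ * y = r * sin (θ+φ) := by
        rw [hx, hy, Real.sin_add]; ring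
      rw [e1, e2, mul_pow, mul_pow]
      rw [show 2*(k+j) = 2*k + 2*j by ring, pow_add]
      ring
    simp only [hinteg]
    rw [intervalIntegral.integral_const_mul]
    have hper : Function.Periodic (fun θ : ℝ => cos θ^(2*k) * sin θ^(2*j)) (2*π) := by
      intro θ; simp [Real.cos_add_two_pi, Real.sin_add_two_pi]
    have hshift : (∫ θ in (0:ℝ)..(2*π), cos (θ+φ) ^ (2*k) * sin (θ+φ) ^ (2*j)) = Tcs k j := by
      rw [intervalIntegral.integral_comp_add_right
        (fun t => cos t ^ (2*k) * sin t ^ (2*j)) φ]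
      have := hper.intervalIntegral_add_eq φ 0
      simp only [zero_add] at this ⊢
      rw [show (2*π+φ) = φ + 2*π by ring, this, Tcs]
    rw [hshift]
    have h1 : r^2 = x^2+y^2 := by
      rw [hr, Complex.sq_norm, Complex.normSq_mk]; ring
    rw [pow_mul, h1]

noncomputable def rotM (N : ℕ) (a b : Fin N) (θ : ℝ) : Matrix (Fin N) (Fin N) ℝ :=
  Matrix.of fun i l =>
    if i = a then (if l = a then cos θ else if l = b then -sin θ else 0)
    else if i = b then (if l = a then sin θ else if l = b then cos θ else 0)
    else if i = l then 1 else 0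

section rotlemmas
variable {N : ℕ} {a b : Fin N} (θ : ℝ)

lemma rot_sum_a (hab : a ≠ b) (g : Fin N → ℝ) :
    ∑ t, rotM N a b θ a t * g t = cos θ * g a - sin θ * g b := by
  rw [← Finset.sum_subset (Finset.subset_univ {a, b})
    (fun t _ ht => by
      simp only [Finset.mem_insert, Finset.mem_singleton, not_or] at ht
      simp [rotM, Ne.symm ht.1, Ne.symm ht.2, ht])]
  rw [Finset.sum_pair hab]
  simp [rotM, hab, Ne.symm hab]
  ring

lemma rot_sum_b (hab : a ≠ b) (g : Fin N → ℝ) :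
    ∑ t, rotM N a b θ b t * g t = sin θ * g a + cos θ * g b := by
  rw [← Finset.sum_subset (Finset.subset_univ {a, b})
    (fun t _ ht => by
      simp only [Finset.mem_insert, Finset.mem_singleton, not_or] at ht
      simp [rotM, Ne.symm ht.1, Ne.symm ht.2, ht])]
  rw [Finset.sum_pair hab]
  simp [rotM, hab, Ne.symm hab]

lemma rot_sum_other {i : Fin N} (hia : i ≠ a) (hib : i ≠ b) (g : Fin N → ℝ) :
    ∑ t, rotM N a b θ i t * g t = g i := by
  rw [Finset.sum_eq_single i (fun t _ ht => by simp [rotM, hia, hib, Ne.symm ht])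
    (fun h => absurd (Finset.mem_univ i) h)]
  simp [rotM, hia, hib]

lemma rotM_aa : rotM N a b θ a a = cos θ := by simp [rotM]

lemma rotM_ab (hab : a ≠ b) : rotM N a b θ a b = -sin θ := by simp [rotM, Ne.symm hab]

lemma rotM_ba (hab : a ≠ b) : rotM N a b θ b a = sin θ := by simp [rotM, Ne.symm hab]

lemma rotM_bb (hab : a ≠ b) : rotM N a b θ b b = cos θ := by simp [rotM, Ne.symm hab]

lemma rotM_a_other {l : Fin N} (hla : l ≠ a) (hlb : l ≠ b) : rotM N a b θ a l = 0 := by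
  simp [rotM, hla, hlb]

lemma rotM_b_other (hab : a ≠ b) {l : Fin N} (hla : l ≠ a) (hlb : l ≠ b) :
    rotM N a b θ b l = 0 := by
  simp [rotM, hla, hlb, Ne.symm hab]

lemma rotM_other {i l : Fin N} (hia : i ≠ a) (hib : i ≠ b) :
    rotM N a b θ i l = if i = l then 1 else 0 := by
  simp [rotM, hia, hib]

lemma rotM_mem (hab : a ≠ b) : rotM N a b θ ∈ Matrix.orthogonalGroup (Fin N) ℝ := by
  rw [Matrix.mem_orthogonalGroup_iff]
  ext i l
  rw [Matrix.mul_apply]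
  simp only [Matrix.star_apply, Matrix.conjTranspose_apply, star_trivial, Matrix.transpose_apply]
  by_cases hia : i = a
  · rw [hia, rot_sum_a θ hab (fun t => rotM N a b θ l t)]
    by_cases hla : l = a
    · rw [hla, rotM_aa, rotM_ab _ hab, Matrix.one_apply_eq]
      nlinarith [sin_sq_add_cos_sq θ]
    · by_cases hlb : l = b
      · rw [hlb, rotM_ba _ hab, rotM_bb _ hab, Matrix.one_apply_ne hab]
        ring
      · rw [rotM_other θ hla hlb, rotM_other θ hla hlb, if_neg hla, if_neg hlb,
          Matrix.one_apply_ne (fun h => hla h.symm)]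
        ring
  · by_cases hib : i = b
    · rw [hib, rot_sum_b θ hab (fun t => rotM N a b θ l t)]
      by_cases hla : l = a
      · rw [hla, rotM_aa, rotM_ab _ hab, Matrix.one_apply_ne (Ne.symm hab)]
        ring
      · by_cases hlb : l = b
        · rw [hlb, rotM_ba _ hab, rotM_bb _ hab, Matrix.one_apply_eq]
          nlinarith [sin_sq_add_cos_sq θ]
        · rw [rotM_other θ hla hlb, rotM_other θ hla hlb, if_neg hla, if_neg hlb,
            Matrix.one_apply_ne (fun h => hlb h.symm)]
          ring
    · rw [rot_sum_other θ hia hib (fun t => rotM N a b θ l t)]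
      by_cases hla : l = a
      · rw [hla, rotM_a_other θ hia hib, Matrix.one_apply_ne hia]
      · by_cases hlb : l = b
        · rw [hlb, rotM_b_other θ hab hia hib, Matrix.one_apply_ne hib]
        · rw [rotM_other θ hla hlb, Matrix.one_apply]
          by_cases hil : i = l
          · simp [hil]
          · simp [hil, Ne.symm hil]

lemma rotM_mul_apply_a (hab : a ≠ b) (O : Matrix (Fin N) (Fin N) ℝ) (l : Fin N) :
    (rotM N a b θ * O) a l = cos θ * O a l - sin θ * O b l := by
  rw [Matrix.mul_apply]; exact rot_sum_a θ hab _

lemma rotM_mul_apply_b (hab : a ≠ b) (O : Matrix (Fin N) (Fin N) ℝ) (l : Fin N) :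
    (rotM N a b θ * O) b l = sin θ * O a l + cos θ * O b l := by
  rw [Matrix.mul_apply]; exact rot_sum_b θ hab _

lemma rotM_mul_apply_other {i : Fin N} (hia : i ≠ a) (hib : i ≠ b)
    (O : Matrix (Fin N) (Fin N) ℝ) (l : Fin N) :
    (rotM N a b θ * O) i l = O i l := by
  rw [Matrix.mul_apply]; exact rot_sum_other θ hia hib _

end rotlemmas

lemma measurable_entry {N : ℕ} (i l : Fin N) :
    Measurable (fun O : Matrix.orthogonalGroup (Fin N) ℝ =>
      (O : Matrix (Fin N) (Fin N) ℝ) i l) := by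
  have h1 : Measurable (fun M : Matrix (Fin N) (Fin N) ℝ => M i l) :=
    (measurable_pi_apply l).comp (measurable_pi_apply i)
  exact h1.comp measurable_subtype_coe

lemma measurable_mul_left {N : ℕ} (g : Matrix.orthogonalGroup (Fin N) ℝ) :
    Measurable (fun x : Matrix.orthogonalGroup (Fin N) ℝ => g * x) := by
  have h1 : Measurable (fun x : Matrix.orthogonalGroup (Fin N) ℝ =>
      ((g : Matrix (Fin N) (Fin N) ℝ) * (x : Matrix (Fin N) (Fin N) ℝ))) := by
    apply measurable_pi_lambda
    intro i
    apply measurable_pi_lambda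
    intro l
    have : (fun x : Matrix.orthogonalGroup (Fin N) ℝ =>
        ((g : Matrix (Fin N) (Fin N) ℝ) * (x : Matrix (Fin N) (Fin N) ℝ)) i l)
        = fun (x : Matrix.orthogonalGroup (Fin N) ℝ) => ∑ t, (g : Matrix (Fin N) (Fin N) ℝ) i t *
            (x : Matrix (Fin N) (Fin N) ℝ) t l := by
      funext x; rw [Matrix.mul_apply]
    rw [this]
    exact Finset.measurable_sum _ (fun t _ => (measurable_entry t l).const_mul _)
  exact Measurable.subtype_mk h1

lemma row_sq_sum {N : ℕ} (O : Matrix.orthogonalGroup (Fin N) ℝ) (i : Fin N) :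
    ∑ t, ((O : Matrix (Fin N) (Fin N) ℝ) i t)^2 = 1 := by
  have h2 : (O : Matrix (Fin N) (Fin N) ℝ) * star (O : Matrix (Fin N) (Fin N) ℝ) = 1 :=
    O.2.2
  have h3 : ((O : Matrix (Fin N) (Fin N) ℝ) * star (O : Matrix (Fin N) (Fin N) ℝ)) i i
      = (1 : Matrix (Fin N) (Fin N) ℝ) i i := by rw [h2]
  rw [Matrix.mul_apply, Matrix.one_apply_eq] at h3
  simp only [Matrix.star_apply, Matrix.conjTranspose_apply, star_trivial] at h3
  rw [← h3]
  apply Finset.sum_congr rfl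
  intro t _; ring

lemma col_sq_sum {N : ℕ} (O : Matrix.orthogonalGroup (Fin N) ℝ) (l : Fin N) :
    ∑ i, ((O : Matrix (Fin N) (Fin N) ℝ) i l)^2 = 1 := by
  have h2 : star (O : Matrix (Fin N) (Fin N) ℝ) * (O : Matrix (Fin N) (Fin N) ℝ) = 1 :=
    O.2.1
  have h3 : (star (O : Matrix (Fin N) (Fin N) ℝ) * (O : Matrix (Fin N) (Fin N) ℝ)) l l
      = (1 : Matrix (Fin N) (Fin N) ℝ) l l := by rw [h2]
  rw [Matrix.mul_apply, Matrix.one_apply_eq] at h3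
  simp only [Matrix.star_apply, Matrix.conjTranspose_apply, star_trivial] at h3
  rw [← h3]
  apply Finset.sum_congr rfl
  intro t _; ring

lemma entry_abs_le {N : ℕ} (O : Matrix.orthogonalGroup (Fin N) ℝ) (i l : Fin N) :
    |(O : Matrix (Fin N) (Fin N) ℝ) i l| ≤ 1 := by
  have h := row_sq_sum O i
  have h1 : ((O : Matrix (Fin N) (Fin N) ℝ) i l)^2 ≤ 1 := by
    rw [← h]
    exact Finset.single_le_sum (f := fun t => ((O : Matrix (Fin N) (Fin N) ℝ) i t)^2)
      (fun t _ => sq_nonneg _) (Finset.mem_univ l)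
  rw [abs_le]; constructor <;> nlinarith


noncomputable def mom (N : ℕ) (μ : Measure (Matrix.orthogonalGroup (Fin N) ℝ))
    (a b : Fin N) (k j : ℕ) : ℝ :=
  ∫ O, ((O : Matrix (Fin N) (Fin N) ℝ) a a)^(2*k) *
    ((O : Matrix (Fin N) (Fin N) ℝ) b a)^(2*j) ∂μ

section core

variable {N : ℕ} {μ : Measure (Matrix.orthogonalGroup (Fin N) ℝ)} [IsProbabilityMeasure μ]
  {a b : Fin N}

lemma integral_linv (hinv : ∀ g : Matrix.orthogonalGroup (Fin N) ℝ,
      Measure.map (fun x => g * x) μ = μ)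
    (g : Matrix.orthogonalGroup (Fin N) ℝ) (F : Matrix.orthogonalGroup (Fin N) ℝ → ℝ)
    (hF : Measurable F) : ∫ x, F (g * x) ∂μ = ∫ x, F x ∂μ := by
  conv_rhs => rw [← hinv g]
  rw [integral_map (measurable_mul_left g).aemeasurable hF.aestronglyMeasurable]

lemma meas_mom (a b : Fin N) (k j : ℕ) :
    Measurable (fun O : Matrix.orthogonalGroup (Fin N) ℝ =>
      ((O : Matrix (Fin N) (Fin N) ℝ) a a)^(2*k) *
        ((O : Matrix (Fin N) (Fin N) ℝ) b a)^(2*j)) :=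
  ((measurable_entry a a).pow_const _).mul ((measurable_entry b a).pow_const _)

lemma mom_rot (hinv : ∀ g : Matrix.orthogonalGroup (Fin N) ℝ,
      Measure.map (fun x => g * x) μ = μ) (hab : a ≠ b) (θ : ℝ) (k j : ℕ) :
    ∫ O : Matrix.orthogonalGroup (Fin N) ℝ,
      (cos θ * (O : Matrix (Fin N) (Fin N) ℝ) a a
          - sin θ * (O : Matrix (Fin N) (Fin N) ℝ) b a)^(2*k) *
      (sin θ * (O : Matrix (Fin N) (Fin N) ℝ) a a
          + cos θ * (O : Matrix (Fin N) (Fin N) ℝ) b a)^(2*j) ∂μ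
      = mom N μ a b k j := by
  set g : Matrix.orthogonalGroup (Fin N) ℝ := ⟨rotM N a b θ, rotM_mem θ hab⟩ with hg
  have hcalc : ∀ O : Matrix.orthogonalGroup (Fin N) ℝ,
      (cos θ * (O : Matrix (Fin N) (Fin N) ℝ) a a
          - sin θ * (O : Matrix (Fin N) (Fin N) ℝ) b a)^(2*k) *
      (sin θ * (O : Matrix (Fin N) (Fin N) ℝ) a a
          + cos θ * (O : Matrix (Fin N) (Fin N) ℝ) b a)^(2*j)
      = (((g*O : Matrix.orthogonalGroup (Fin N) ℝ) : Matrix (Fin N) (Fin N) ℝ) a a)^(2*k) *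
        (((g*O : Matrix.orthogonalGroup (Fin N) ℝ) : Matrix (Fin N) (Fin N) ℝ) b a)^(2*j) := by
    intro O
    have hval : ((g*O : Matrix.orthogonalGroup (Fin N) ℝ) : Matrix (Fin N) (Fin N) ℝ)
        = rotM N a b θ * (O : Matrix (Fin N) (Fin N) ℝ) := rfl
    rw [hval, rotM_mul_apply_a θ hab, rotM_mul_apply_b θ hab]
  calc ∫ O : Matrix.orthogonalGroup (Fin N) ℝ,
      (cos θ * (O : Matrix (Fin N) (Fin N) ℝ) a a
          - sin θ * (O : Matrix (Fin N) (Fin N) ℝ) b a)^(2*k) *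
      (sin θ * (O : Matrix (Fin N) (Fin N) ℝ) a a
          + cos θ * (O : Matrix (Fin N) (Fin N) ℝ) b a)^(2*j) ∂μ
      = ∫ O, (((g*O : Matrix.orthogonalGroup (Fin N) ℝ) : Matrix (Fin N) (Fin N) ℝ) a a)^(2*k) *
          (((g*O : Matrix.orthogonalGroup (Fin N) ℝ) : Matrix (Fin N) (Fin N) ℝ) b a)^(2*j) ∂μ :=
        integral_congr_ae (Filter.Eventually.of_forall fun O => hcalc O)
    _ = mom N μ a b k j := integral_linv hinv g _ (meas_mom a b k j)

lemma mom_fubini (hinv : ∀ g : Matrix.orthogonalGroup (Fin N) ℝ,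
      Measure.map (fun x => g * x) μ = μ) (hab : a ≠ b) (k j : ℕ) :
    2*π * mom N μ a b k j
      = Tcs k j * ∫ O : Matrix.orthogonalGroup (Fin N) ℝ,
          (((O : Matrix (Fin N) (Fin N) ℝ) a a)^2
            + ((O : Matrix (Fin N) (Fin N) ℝ) b a)^2)^(k+j) ∂μ := by
  haveI hfin : IsFiniteMeasure (volume.restrict (Set.Ioc (0:ℝ) (2*π))) := by
    constructor
    rw [Measure.restrict_apply_univ, Real.volume_Ioc]
    exact ENNReal.ofReal_lt_top
  set X : Matrix.orthogonalGroup (Fin N) ℝ → ℝ :=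
    fun O => (O : Matrix (Fin N) (Fin N) ℝ) a a with hX
  set Y : Matrix.orthogonalGroup (Fin N) ℝ → ℝ :=
    fun O => (O : Matrix (Fin N) (Fin N) ℝ) b a with hY
  set Φ : ℝ → Matrix.orthogonalGroup (Fin N) ℝ → ℝ :=
    fun θ O => (cos θ * X O - sin θ * Y O)^(2*k) * (sin θ * X O + cos θ * Y O)^(2*j) with hΦ
  have measX : Measurable X := measurable_entry a a
  have measY : Measurable Y := measurable_entry b a
  have measΦ : Measurable (Function.uncurry Φ) := by
    apply Measurable.mul <;> apply Measurable.pow_const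
    · exact ((Real.measurable_cos.comp measurable_fst).mul (measX.comp measurable_snd)).sub
        ((Real.measurable_sin.comp measurable_fst).mul (measY.comp measurable_snd))
    · exact ((Real.measurable_sin.comp measurable_fst).mul (measX.comp measurable_snd)).add
        ((Real.measurable_cos.comp measurable_fst).mul (measY.comp measurable_snd))
  have boundΦ : ∀ p : ℝ × Matrix.orthogonalGroup (Fin N) ℝ,
      |Function.uncurry Φ p| ≤ 2^(2*k) * 2^(2*j) := by
    rintro ⟨θ, O⟩
    have hXb := entry_abs_le O a a
    have hYb := entry_abs_le O b a
    have hc := Real.abs_cos_le_one θ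
    have hs := Real.abs_sin_le_one θ
    have h1 : |cos θ * X O - sin θ * Y O| ≤ 2 := by
      calc |cos θ * X O - sin θ * Y O| ≤ |cos θ * X O| + |sin θ * Y O| := abs_sub _ _
        _ ≤ 2 := by
            rw [abs_mul, abs_mul]
            nlinarith [abs_nonneg (cos θ), abs_nonneg (sin θ), abs_nonneg (X O), abs_nonneg (Y O)]
    have h2 : |sin θ * X O + cos θ * Y O| ≤ 2 := by
      calc |sin θ * X O + cos θ * Y O| ≤ |sin θ * X O| + |cos θ * Y O| := abs_add_le _ _
        _ ≤ 2 := by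
            rw [abs_mul, abs_mul]
            nlinarith [abs_nonneg (cos θ), abs_nonneg (sin θ), abs_nonneg (X O), abs_nonneg (Y O)]
    have : |Φ θ O| ≤ 2^(2*k) * 2^(2*j) := by
      rw [hΦ]
      simp only []
      rw [abs_mul, abs_pow, abs_pow]
      exact mul_le_mul (pow_le_pow_left₀ (abs_nonneg _) h1 _)
        (pow_le_pow_left₀ (abs_nonneg _) h2 _) (pow_nonneg (abs_nonneg _) _)
        (pow_nonneg (by norm_num) _)
    exact this
  have intΦ : Integrable (Function.uncurry Φ)
      ((volume.restrict (Set.Ioc (0:ℝ) (2*π))).prod μ) :=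
    Integrable.mono' (integrable_const _) measΦ.aestronglyMeasurable (ae_of_all _ boundΦ)
  have swap := MeasureTheory.integral_integral_swap intΦ
  have h2π : (0:ℝ) ≤ 2*π := by positivity
  calc 2*π * mom N μ a b k j
      = ∫ _θ in (0:ℝ)..(2*π), mom N μ a b k j := by
        rw [intervalIntegral.integral_const, smul_eq_mul]; ring
    _ = ∫ θ in (0:ℝ)..(2*π), ∫ O, Φ θ O ∂μ :=
        intervalIntegral.integral_congr (fun θ _ => (mom_rot hinv hab θ k j).symm)
    _ = ∫ θ in Set.Ioc (0:ℝ) (2*π), ∫ O, Φ θ O ∂μ := intervalIntegral.integral_of_le h2π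
    _ = ∫ O, (∫ θ in Set.Ioc (0:ℝ) (2*π), Φ θ O) ∂μ := swap
    _ = ∫ O, ((X O)^2 + (Y O)^2)^(k+j) * Tcs k j ∂μ := by
        refine integral_congr_ae (Filter.Eventually.of_forall fun O => ?_)
        show (∫ θ in Set.Ioc (0:ℝ) (2*π), Φ θ O) = (X O ^ 2 + Y O ^ 2) ^ (k + j) * Tcs k j
        rw [← intervalIntegral.integral_of_le h2π]
        exact circle_avg k j (X O) (Y O)
    _ = Tcs k j * ∫ O, ((X O)^2 + (Y O)^2)^(k+j) ∂μ := by
        rw [MeasureTheory.integral_mul_const]; ring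

lemma mom_zero : mom N μ a b 0 0 = 1 := by
  have : ∀ O : Matrix.orthogonalGroup (Fin N) ℝ,
      ((O : Matrix (Fin N) (Fin N) ℝ) a a)^(2*0) *
        ((O : Matrix (Fin N) (Fin N) ℝ) b a)^(2*0) = 1 := by
    intro O; norm_num
  rw [mom, integral_congr_ae (Filter.Eventually.of_forall this),
    MeasureTheory.integral_const]
  simp

lemma mom_integrable (k j : ℕ) :
    Integrable (fun O : Matrix.orthogonalGroup (Fin N) ℝ =>
      ((O : Matrix (Fin N) (Fin N) ℝ) a a)^(2*k) *
        ((O : Matrix (Fin N) (Fin N) ℝ) b a)^(2*j)) μ := by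
  refine Integrable.mono' (integrable_const 1) (meas_mom a b k j).aestronglyMeasurable
    (ae_of_all _ fun O => ?_)
  rw [Real.norm_eq_abs, abs_mul, abs_pow, abs_pow]
  exact mul_le_one₀ (pow_le_one₀ (abs_nonneg _) (entry_abs_le O a a))
    (pow_nonneg (abs_nonneg _) _) (pow_le_one₀ (abs_nonneg _) (entry_abs_le O b a))

lemma mom_L1 (hinv : ∀ g : Matrix.orthogonalGroup (Fin N) ℝ,
      Measure.map (fun x => g * x) μ = μ) (hab : a ≠ b) (n : ℕ) :
    mom N μ a b n 0 = mom N μ a b (n+1) 0 + ((N:ℝ) - 1) * mom N μ a b n 1 := by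
  set f : Fin N → Matrix.orthogonalGroup (Fin N) ℝ → ℝ :=
    fun i O => ((O : Matrix (Fin N) (Fin N) ℝ) a a)^(2*n) *
      ((O : Matrix (Fin N) (Fin N) ℝ) i a)^(2*1) with hf
  have hint : ∀ i : Fin N, Integrable (f i) μ := fun i => mom_integrable n 1
  have step1 : mom N μ a b n 0 = ∑ i : Fin N, ∫ O, f i O ∂μ := by
    rw [mom, ← integral_finset_sum _ (fun i _ => hint i)]
    refine integral_congr_ae (Filter.Eventually.of_forall fun O => ?_)
    show ((O : Matrix (Fin N) (Fin N) ℝ) a a)^(2*n) *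
        ((O : Matrix (Fin N) (Fin N) ℝ) b a)^(2*0) = ∑ i : Fin N, f i O
    have hsum : ∑ i : Fin N, ((O : Matrix (Fin N) (Fin N) ℝ) i a)^(2*1) = 1 := by
      rw [← col_sq_sum O a]
    calc ((O : Matrix (Fin N) (Fin N) ℝ) a a)^(2*n) *
        ((O : Matrix (Fin N) (Fin N) ℝ) b a)^(2*0)
        = ((O : Matrix (Fin N) (Fin N) ℝ) a a)^(2*n) := by norm_num
      _ = ((O : Matrix (Fin N) (Fin N) ℝ) a a)^(2*n) *
          ∑ i : Fin N, ((O : Matrix (Fin N) (Fin N) ℝ) i a)^(2*1) := by rw [hsum, mul_one]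
      _ = ∑ i : Fin N, f i O := Finset.mul_sum _ _ _
  have step3 : ∫ O, f a O ∂μ = mom N μ a b (n+1) 0 := by
    rw [mom]
    refine integral_congr_ae (Filter.Eventually.of_forall fun O => ?_)
    show ((O : Matrix (Fin N) (Fin N) ℝ) a a)^(2*n) *
        ((O : Matrix (Fin N) (Fin N) ℝ) a a)^(2*1) =
      ((O : Matrix (Fin N) (Fin N) ℝ) a a)^(2*(n+1)) *
        ((O : Matrix (Fin N) (Fin N) ℝ) b a)^(2*0)
    ring
  have step4 : ∀ i ∈ Finset.univ.erase a, ∫ O, f i O ∂μ = mom N μ a b n 1 := by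
    intro i hi
    have hia : i ≠ a := (Finset.mem_erase.mp hi).1
    by_cases hib : i = b
    · subst hib; rfl
    · have hbi : b ≠ i := fun h => hib h.symm
      set g : Matrix.orthogonalGroup (Fin N) ℝ :=
        ⟨rotM N b i (π/2), rotM_mem (π/2) hbi⟩ with hg
      have key := integral_linv hinv g _ (meas_mom a b n 1)
      rw [mom, ← key]
      refine integral_congr_ae (Filter.Eventually.of_forall fun O => ?_)
      have hval : ((g*O : Matrix.orthogonalGroup (Fin N) ℝ) : Matrix (Fin N) (Fin N) ℝ)
          = rotM N b i (π/2) * (O : Matrix (Fin N) (Fin N) ℝ) := rfl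
      show f i O = (((g*O : Matrix.orthogonalGroup (Fin N) ℝ) : Matrix (Fin N) (Fin N) ℝ) a a)^(2*n) *
          (((g*O : Matrix.orthogonalGroup (Fin N) ℝ) : Matrix (Fin N) (Fin N) ℝ) b a)^(2*1)
      rw [hval, rotM_mul_apply_other (π/2) hab (Ne.symm hia),
        rotM_mul_apply_a (π/2) hbi]
      rw [Real.cos_pi_div_two, Real.sin_pi_div_two, hf]
      ring
  have step5 : ∑ i ∈ Finset.univ.erase a, ∫ O, f i O ∂μ = ((N:ℝ) - 1) * mom N μ a b n 1 := by
    rw [Finset.sum_congr rfl step4, Finset.sum_const,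
      Finset.card_erase_of_mem (Finset.mem_univ a), Finset.card_univ, Fintype.card_fin]
    have hN1 : 1 ≤ N := by
      have : N ≠ 0 := by intro h; subst h; exact a.elim0
      omega
    rw [nsmul_eq_mul, Nat.cast_sub hN1]
    norm_num
  rw [step1, ← Finset.add_sum_erase _ _ (Finset.mem_univ a), step3, step5]

theorem mom_formula (hinv : ∀ g : Matrix.orthogonalGroup (Fin N) ℝ,
      Measure.map (fun x => g * x) μ = μ) (hab : a ≠ b) (k j : ℕ) :
    mom N μ a b k j = (Nat.doubleFactorial (2*k-1) : ℝ) * (Nat.doubleFactorial (2*j-1) : ℝ) /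
      ∏ i ∈ Finset.range (k+j), ((N:ℝ) + 2*i) := by
  have hπ : (2*π) ≠ 0 := by positivity
  have h5 : ∀ p q : ℕ, (Nat.doubleFactorial (2*(p+q)-1) : ℝ) * mom N μ a b p q
      = (Nat.doubleFactorial (2*p-1) : ℝ) * (Nat.doubleFactorial (2*q-1) : ℝ)
        * mom N μ a b (p+q) 0 := by
    intro p q
    have e1 := mom_fubini hinv hab p q
    have e2 := mom_fubini hinv hab (p+q) 0
    rw [Nat.add_zero] at e2
    have key : mom N μ a b p q * Tcs (p+q) 0 = Tcs p q * mom N μ a b (p+q) 0 := by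
      apply mul_left_cancel₀ hπ
      linear_combination Tcs (p+q) 0 * e1 - Tcs p q * e2
    have hT := Tcs_df p q
    apply mul_right_cancel₀ (Tcs_pos (p+q) 0).ne'
    linear_combination (Nat.doubleFactorial (2*(p+q)-1) : ℝ) * key
      + mom N μ a b (p+q) 0 * hT
  have h6 : ∀ n : ℕ, (2*(n:ℝ)+1) * mom N μ a b n 1 = mom N μ a b (n+1) 0 := by
    intro n
    have h := h5 n 1
    rw [show 2*(n+1)-1 = 2*n+1 from by omega, df_succ,
      show (2*1-1 : ℕ) = 1 from by norm_num] at h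
    have hDF : (Nat.doubleFactorial (2*n-1) : ℝ) ≠ 0 :=
      Nat.cast_ne_zero.mpr (Nat.doubleFactorial_pos _).ne'
    apply mul_left_cancel₀ hDF
    simp only [Nat.doubleFactorial] at h
    linear_combination h
  have h7 : ∀ n : ℕ, ((N:ℝ) + 2*n) * mom N μ a b (n+1) 0 = (2*(n:ℝ)+1) * mom N μ a b n 0 := by
    intro n
    linear_combination (-(2*(n:ℝ)+1)) * mom_L1 hinv hab n + (-((N:ℝ)-1)) * h6 n
  have h8 : ∀ n : ℕ, mom N μ a b n 0 * ∏ i ∈ Finset.range n, ((N:ℝ) + 2*i)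
      = (Nat.doubleFactorial (2*n-1) : ℝ) := by
    intro n
    induction n with
    | zero => simp [mom_zero, Nat.doubleFactorial]
    | succ n ih =>
      rw [Finset.prod_range_succ]
      calc mom N μ a b (n+1) 0 * ((∏ i ∈ Finset.range n, ((N:ℝ) + 2*i)) * ((N:ℝ)+2*n))
          = (((N:ℝ)+2*n) * mom N μ a b (n+1) 0) * ∏ i ∈ Finset.range n, ((N:ℝ) + 2*i) := by
            ring
        _ = ((2*(n:ℝ)+1) * mom N μ a b n 0) * ∏ i ∈ Finset.range n, ((N:ℝ) + 2*i) := by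
            rw [h7 n]
        _ = (2*(n:ℝ)+1) * (mom N μ a b n 0 * ∏ i ∈ Finset.range n, ((N:ℝ) + 2*i)) := by ring
        _ = (2*(n:ℝ)+1) * (Nat.doubleFactorial (2*n-1) : ℝ) := by rw [ih]
        _ = (Nat.doubleFactorial (2*(n+1)-1) : ℝ) := by
            rw [show 2*(n+1)-1 = 2*n+1 from by omega, df_succ]
  have hprod : (0:ℝ) < ∏ i ∈ Finset.range (k+j), ((N:ℝ) + 2*i) := by
    apply Finset.prod_pos
    intro i _
    have : (0:ℝ) < (N:ℝ) := by
      have : N ≠ 0 := by intro h; subst h; exact a.elim0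
      positivity
    positivity
  rw [eq_div_iff hprod.ne']
  have hDFs : (Nat.doubleFactorial (2*(k+j)-1) : ℝ) ≠ 0 :=
    Nat.cast_ne_zero.mpr (Nat.doubleFactorial_pos _).ne'
  apply mul_left_cancel₀ hDFs
  linear_combination (∏ i ∈ Finset.range (k+j), ((N:ℝ) + 2*i)) * h5 k j
    + (Nat.doubleFactorial (2*k-1) : ℝ) * (Nat.doubleFactorial (2*j-1) : ℝ) * h8 (k+j)

end core


/-- Let `O` be Haar-distributed on the orthogonal group `O(N)` (characterized as:
`μ` is a left-invariant probability measure on the orthogonal group). Then for naturals `k, j`,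
`E[O_{11}^{2k} O_{21}^{2j}] = (2k-1)!! (2j-1)!! / (N (N+2) ⋯ (N+2(k+j)-2))`. -/
theorem haar_orthogonal_joint_moments (N : ℕ) (hN : 2 ≤ N) (k j : ℕ)
    (μ : Measure (Matrix.orthogonalGroup (Fin N) ℝ)) [IsProbabilityMeasure μ]
    (hinv : ∀ g : Matrix.orthogonalGroup (Fin N) ℝ,
      Measure.map (fun x => g * x) μ = μ) :
    ∫ O : Matrix.orthogonalGroup (Fin N) ℝ,
        ((O : Matrix (Fin N) (Fin N) ℝ) ⟨0, by omega⟩ ⟨0, by omega⟩) ^ (2 * k) *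
          ((O : Matrix (Fin N) (Fin N) ℝ) ⟨1, by omega⟩ ⟨0, by omega⟩) ^ (2 * j) ∂μ =
      (Nat.doubleFactorial (2 * k - 1) : ℝ) * (Nat.doubleFactorial (2 * j - 1) : ℝ) /
        ∏ i ∈ Finset.range (k + j), ((N : ℝ) + 2 * i) := by
  have hab : (⟨0, by omega⟩ : Fin N) ≠ (⟨1, by omega⟩ : Fin N) := by
    simp [Fin.ext_iff]
  exact mom_formula hinv hab k j
end
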